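/- Let A be uniform on (ZMod 2)^n, let H₁,…,H_l be binary matrices with n columns, and let H_j be an m_j × n binary matrix of full row rank. Set r := rank(H₁,…,H_l) and t := rank(H₁,…,H_l,H_j) − r (the residual rank of H_j). Then for every tuple (s₁,…,s_l) in the range of a ↦ (H₁a,…,H_la) and every s_j ∈ (ZMod 2)^{m_j}: Pr[H_jA = s_j | H₁A = s₁,…,H_lA = s_l] = 2^{-t} if (s₁,…,s_l,s_j) is in the range of a ↦ (H₁a,…,H_la,H_ja), and = 0 otherwise. In particular: (a) if t = m_j (all rows of H_j linearly independent of the rows of H₁,…,H_l), then H_jA is uniform on (ZMod 2)^{m_j} and independent of (H₁A,…,H_lA), so the compromised syndromes give no advantage in guessing H_jA; and (b) in general, an adversary who knows (H₁A,…,H_lA) can guess H_jA correctly with probability exactly 2^{-t}, so for noiseless enrollments P_SA(j,V) ≥ 2^{-t}. -/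

import Mathlib

open LinearMap Module Matrix

/-- Probability of the event `P` under the uniform distribution on the finite type `Ω`. -/
noncomputable def unifProb (Ω : Type*) [Fintype Ω] (P : Ω → Prop) : ℝ :=
  (Nat.card {ω : Ω // P ω} : ℝ) / (Fintype.card Ω : ℝ)

namespace Stmt17

lemma unifProb_congr {Ω : Type*} [Fintype Ω] {P Q : Ω → Prop} (h : ∀ ω, P ω ↔ Q ω) :
    unifProb Ω P = unifProb Ω Q := by
  unfold unifProb
  congr 2
  exact Nat.card_congr (Equiv.subtypeEquivRight h)

lemma card_submodule {M : Type*} [AddCommGroup M] [Module (ZMod 2) M] [Fintype M]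
    (S : Submodule (ZMod 2) M) :
    Nat.card S = 2 ^ finrank (ZMod 2) S := by
  classical
  have : Fintype S := Fintype.ofFinite S
  rw [Nat.card_eq_fintype_card, card_eq_pow_finrank (K := ZMod 2), ZMod.card]

lemma card_fiber {n : ℕ} {W : Type*} [AddCommGroup W] [Module (ZMod 2) W] [Fintype W]
    (f : (Fin n → ZMod 2) →ₗ[ZMod 2] W) {s : W} (hs : s ∈ LinearMap.range f) :
    Nat.card {a : Fin n → ZMod 2 // f a = s}
      = 2 ^ (n - finrank (ZMod 2) (LinearMap.range f)) := by
  obtain ⟨a₀, ha₀⟩ := hs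
  have e : {a : Fin n → ZMod 2 // f a = s} ≃ LinearMap.ker f :=
    { toFun := fun a => ⟨a.1 - a₀, by simp [LinearMap.mem_ker, map_sub, a.2, ha₀]⟩
      invFun := fun b => ⟨b.1 + a₀, by
        have hb := LinearMap.mem_ker.mp b.2
        simp [map_add, hb, ha₀]⟩
      left_inv := fun a => by ext1; simp
      right_inv := fun b => by ext1; simp }
  rw [Nat.card_congr e, card_submodule]
  congr 1
  have h1 := f.finrank_range_add_finrank_ker
  have h2 : finrank (ZMod 2) (Fin n → ZMod 2) = n := Module.finrank_fin_fun (R := ZMod 2)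
  omega

lemma filter_card_eq_nat_card {α : Type*} [Fintype α] (p : α → Prop) [DecidablePred p] :
    (Finset.univ.filter p).card = Nat.card {x // p x} := by
  rw [Nat.card_eq_fintype_card]
  exact (Fintype.card_subtype _).symm

lemma card_empty_pred {α : Type*} {P : α → Prop} (h : ∀ a, ¬ P a) :
    Nat.card {a // P a} = 0 := by
  have : IsEmpty {a // P a} := ⟨fun x => h x.1 x.2⟩
  exact Nat.card_of_isEmpty

lemma range_rank_le {n : ℕ} {W : Type*} [AddCommGroup W] [Module (ZMod 2) W]
    (f : (Fin n → ZMod 2) →ₗ[ZMod 2] W) :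
    finrank (ZMod 2) (LinearMap.range f) ≤ n := by
  have := f.finrank_range_le
  rwa [Module.finrank_fin_fun (R := ZMod 2)] at this

open scoped Classical in
lemma unifProb_linear {n : ℕ} {W : Type*} [AddCommGroup W] [Module (ZMod 2) W] [Fintype W]
    (f : (Fin n → ZMod 2) →ₗ[ZMod 2] W) (s : W) :
    unifProb (Fin n → ZMod 2) (fun a => f a = s)
      = (if s ∈ LinearMap.range f then
          (2 : ℝ) ^ (n - finrank (ZMod 2) (LinearMap.range f)) else 0) / 2 ^ n := by
  unfold unifProb
  rw [show (Fintype.card (Fin n → ZMod 2)) = 2 ^ n by simp]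
  split_ifs with h
  · rw [card_fiber f h]
    push_cast
    ring
  · rw [card_empty_pred (fun a ha => h ⟨a, ha⟩)]
    push_cast
    ring

def prodEquivSub {M N : Type*} [AddCommGroup M] [AddCommGroup N] [Module (ZMod 2) M]
    [Module (ZMod 2) N] (p : Submodule (ZMod 2) M) (q : Submodule (ZMod 2) N) :
    (p.prod q) ≃ₗ[ZMod 2] (p × q) where
  toFun x := (⟨x.1.1, x.2.1⟩, ⟨x.1.2, x.2.2⟩)
  invFun y := ⟨(y.1.1, y.2.1), y.1.2, y.2.2⟩
  map_add' _ _ := rfl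
  map_smul' _ _ := rfl
  left_inv _ := rfl
  right_inv _ := rfl

lemma finrank_prod_sub {M N : Type*} [AddCommGroup M] [AddCommGroup N] [Module (ZMod 2) M]
    [Module (ZMod 2) N] [Module.Finite (ZMod 2) M] [Module.Finite (ZMod 2) N]
    (p : Submodule (ZMod 2) M) (q : Submodule (ZMod 2) N) :
    finrank (ZMod 2) (p.prod q) = finrank (ZMod 2) p + finrank (ZMod 2) q := by
  rw [(prodEquivSub p q).finrank_eq, Module.finrank_prod]

end Stmt17

open Stmt17

set_option maxHeartbeats 2000000 in
/-- Let `A` be uniform on `(ZMod 2)^n`, `H₁,…,H_l` binary matrices with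
`n` columns, and `H_j` of full row rank `m_j`.  With `r = rank(H₁,…,H_l)` and residual rank
`t = rank(H₁,…,H_l,H_j) − r`: for every attainable tuple `s` of compromised syndromes and
every `s_j`, `Pr[H_jA = s_j ∣ (H₁A,…,H_lA) = s]` equals `2^{-t}` if `(s,s_j)` is jointly
attainable and `0` otherwise.  In particular (a) if `t = m_j` then `H_jA` is uniform and
independent of `(H₁A,…,H_lA)`, and (b) some guessing strategy based on `(H₁A,…,H_lA)`
recovers `H_jA` with probability exactly `2^{-t}` (and no strategy does better), so for
noiseless enrollments `P_SA(j,V) ≥ 2^{-t}`. -/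
theorem stmt_17 (n l mj : ℕ) (m : Fin l → ℕ)
    (H : ∀ i, Matrix (Fin (m i)) (Fin n) (ZMod 2))
    (Hj : Matrix (Fin mj) (Fin n) (ZMod 2))
    (hHj : LinearIndependent (ZMod 2) (fun q => Hj q)) :
    let stacked : Matrix ((i : Fin l) × Fin (m i)) (Fin n) (ZMod 2) :=
      Matrix.of fun p j => H p.1 p.2 j
    let full : Matrix (((i : Fin l) × Fin (m i)) ⊕ Fin mj) (Fin n) (ZMod 2) :=
      Matrix.of (Sum.elim (fun p j => H p.1 p.2 j) (fun q j => Hj q j))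
    let r : ℕ := stacked.rank
    let t : ℕ := full.rank - r
    let φ : (Fin n → ZMod 2) → ∀ i : Fin l, Fin (m i) → ZMod 2 :=
      fun a i => (H i).mulVec a
    (∀ s : ∀ i : Fin l, Fin (m i) → ZMod 2, (∃ a, φ a = s) →
      ∀ sj : Fin mj → ZMod 2,
        unifProb (Fin n → ZMod 2) (fun a => Hj.mulVec a = sj ∧ φ a = s)
            / unifProb (Fin n → ZMod 2) (fun a => φ a = s)
          = if ∃ a, φ a = s ∧ Hj.mulVec a = sj then 1 / 2 ^ t else 0)
    ∧ (t = mj →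
        (∀ sj : Fin mj → ZMod 2,
          unifProb (Fin n → ZMod 2) (fun a => Hj.mulVec a = sj) = 1 / 2 ^ mj)
        ∧ ∀ (sj : Fin mj → ZMod 2) (s : ∀ i : Fin l, Fin (m i) → ZMod 2),
            unifProb (Fin n → ZMod 2) (fun a => Hj.mulVec a = sj ∧ φ a = s)
              = unifProb (Fin n → ZMod 2) (fun a => Hj.mulVec a = sj)
                * unifProb (Fin n → ZMod 2) (fun a => φ a = s))
    ∧ (∃ guess : (∀ i : Fin l, Fin (m i) → ZMod 2) → (Fin mj → ZMod 2),
        unifProb (Fin n → ZMod 2) (fun a => guess (φ a) = Hj.mulVec a) = 1 / 2 ^ t)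
    ∧ (∀ guess : (∀ i : Fin l, Fin (m i) → ZMod 2) → (Fin mj → ZMod 2),
        unifProb (Fin n → ZMod 2) (fun a => guess (φ a) = Hj.mulVec a) ≤ 1 / 2 ^ t) := by
  classical
  intro stacked full r t φ
  let Lφ : (Fin n → ZMod 2) →ₗ[ZMod 2] (∀ i : Fin l, Fin (m i) → ZMod 2) :=
    LinearMap.pi (fun i => (H i).mulVecLin)
  let Lψ : (Fin n → ZMod 2) →ₗ[ZMod 2] (Fin mj → ZMod 2) := Hj.mulVecLin
  let LΦ := Lψ.prod Lφ
  have hφL : ∀ a, φ a = Lφ a := fun a => rfl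
  -- rank of stacked = rank of Lφ
  have hr : finrank (ZMod 2) (LinearMap.range Lφ) = r := by
    have hcomp : Lφ =
        (LinearEquiv.piCurry (ZMod 2) (fun (i : Fin l) (_ : Fin (m i)) => ZMod 2) :
          (((p : (i : Fin l) × Fin (m i)) → ZMod 2) →ₗ[ZMod 2] _)) ∘ₗ stacked.mulVecLin := by
      ext a
      rfl
    show _ = stacked.rank
    rw [Matrix.rank, hcomp, LinearMap.range_comp, LinearEquiv.finrank_map_eq]
  -- rank of full = rank of LΦ
  have hR : finrank (ZMod 2) (LinearMap.range LΦ) = full.rank := by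
    let E1 : ((((i : Fin l) × Fin (m i)) ⊕ Fin mj → ZMod 2)) ≃ₗ[ZMod 2]
        ((((i : Fin l) × Fin (m i)) → ZMod 2) × (Fin mj → ZMod 2)) :=
      LinearEquiv.sumArrowLequivProdArrow _ _ _ _
    let E2 : ((((i : Fin l) × Fin (m i)) → ZMod 2) × (Fin mj → ZMod 2)) ≃ₗ[ZMod 2]
        (((i : Fin l) → Fin (m i) → ZMod 2) × (Fin mj → ZMod 2)) :=
      LinearEquiv.prodCongr
        (LinearEquiv.piCurry (ZMod 2) (fun (i : Fin l) (_ : Fin (m i)) => ZMod 2))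
        (LinearEquiv.refl (ZMod 2) (Fin mj → ZMod 2))
    let E3 : (((i : Fin l) → Fin (m i) → ZMod 2) × (Fin mj → ZMod 2)) ≃ₗ[ZMod 2]
        ((Fin mj → ZMod 2) × ((i : Fin l) → Fin (m i) → ZMod 2)) :=
      LinearEquiv.prodComm _ _ _
    let E : ((((i : Fin l) × Fin (m i)) ⊕ Fin mj → ZMod 2)) ≃ₗ[ZMod 2]
        ((Fin mj → ZMod 2) × ((i : Fin l) → Fin (m i) → ZMod 2)) :=
      (E1.trans E2).trans E3
    have hcomp : LΦ = E.toLinearMap ∘ₗ full.mulVecLin :=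
      LinearMap.ext fun a => rfl
    rw [Matrix.rank, hcomp, LinearMap.range_comp, LinearEquiv.finrank_map_eq]
  -- Lψ surjective
  have hψtop : LinearMap.range Lψ = ⊤ := by
    have hinj : Function.Injective Hj.vecMulLinear := by
      have := Matrix.vecMul_injective_iff.mpr hHj
      simpa [Matrix.coe_vecMulLinear] using this
    have h1 : finrank (ZMod 2) (LinearMap.range Hj.vecMulLinear) = mj := by
      have h1 := Hj.vecMulLinear.finrank_range_add_finrank_ker
      rw [LinearMap.ker_eq_bot.mpr hinj, finrank_bot, Module.finrank_fin_fun (R := ZMod 2)] at h1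
      omega
    have htr : finrank (ZMod 2) (LinearMap.range Lψ) = mj := by
      have h2 : (Hjᵀ)ᵀ.rank = Hjᵀ.rank := Matrix.rank_transpose Hjᵀ
      rw [Matrix.transpose_transpose] at h2
      show finrank (ZMod 2) (LinearMap.range Hj.mulVecLin) = mj
      rw [show finrank (ZMod 2) (LinearMap.range Hj.mulVecLin) = Hj.rank from rfl, h2,
        Matrix.rank, Matrix.mulVecLin_transpose]
      exact h1
    apply Submodule.eq_top_of_finrank_eq
    rw [htr, Module.finrank_fin_fun (R := ZMod 2)]
  have hψrank : finrank (ZMod 2) (LinearMap.range Lψ) = mj := by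
    rw [hψtop, finrank_top, Module.finrank_fin_fun (R := ZMod 2)]
  -- inequalities
  have hle1 : r ≤ full.rank := by
    rw [← hr, ← hR]
    have hcomp : Lφ = (LinearMap.snd (ZMod 2) (Fin mj → ZMod 2) _) ∘ₗ LΦ := rfl
    rw [hcomp, LinearMap.range_comp]
    exact Submodule.finrank_map_le _ _
  have hle2 : full.rank ≤ n := by
    rw [← hR]; exact range_rank_le LΦ
  have hle4 : mj ≤ n := by
    rw [← hψrank]; exact range_rank_le Lψ
  have hprod_le : LinearMap.range LΦ
      ≤ (⊤ : Submodule (ZMod 2) (Fin mj → ZMod 2)).prod (LinearMap.range Lφ) := by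
    rintro ⟨x, y⟩ ⟨a, ha⟩
    refine ⟨Submodule.mem_top, ⟨a, ?_⟩⟩
    exact congrArg Prod.snd ha
  have hle3 : full.rank ≤ mj + r := by
    rw [← hR, ← hr]
    calc finrank (ZMod 2) (LinearMap.range LΦ)
        ≤ finrank (ZMod 2)
            ((⊤ : Submodule (ZMod 2) (Fin mj → ZMod 2)).prod (LinearMap.range Lφ)) :=
          Submodule.finrank_mono hprod_le
      _ = mj + finrank (ZMod 2) (LinearMap.range Lφ) := by
          rw [finrank_prod_sub, finrank_top, Module.finrank_fin_fun (R := ZMod 2)]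
  have ht : t = full.rank - r := rfl
  -- joint membership iff
  have hiff : ∀ (s : ∀ i : Fin l, Fin (m i) → ZMod 2) (sj : Fin mj → ZMod 2),
      (∃ a, φ a = s ∧ Hj.mulVec a = sj) ↔ (sj, s) ∈ LinearMap.range LΦ := by
    intro s sj
    constructor
    · rintro ⟨a, h1, h2⟩
      exact ⟨a, Prod.ext h2 h1⟩
    · rintro ⟨a, ha⟩
      exact ⟨a, congrArg Prod.snd ha, congrArg Prod.fst ha⟩
  -- unified numerator formula
  have hnum : ∀ (s : ∀ i : Fin l, Fin (m i) → ZMod 2) (sj : Fin mj → ZMod 2),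
      unifProb (Fin n → ZMod 2) (fun a => Hj.mulVec a = sj ∧ φ a = s)
        = (if (sj, s) ∈ LinearMap.range LΦ then
            (2 : ℝ) ^ (n - full.rank) else 0) / 2 ^ n := by
    intro s sj
    rw [unifProb_congr (Q := fun a => LΦ a = (sj, s))
      (fun a => ⟨fun h => Prod.ext h.1 h.2,
        fun h => ⟨congrArg Prod.fst h, congrArg Prod.snd h⟩⟩)]
    rw [unifProb_linear LΦ (sj, s), hR]
  have hden : ∀ (s : ∀ i : Fin l, Fin (m i) → ZMod 2),
      unifProb (Fin n → ZMod 2) (fun a => φ a = s)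
        = (if s ∈ LinearMap.range Lφ then (2 : ℝ) ^ (n - r) else 0) / 2 ^ n := by
    intro s
    rw [unifProb_congr (Q := fun a => Lφ a = s) (fun a => by rw [hφL])]
    rw [unifProb_linear Lφ s, hr]
  have two_pow_ne : ∀ k : ℕ, ((2 : ℝ) ^ k) ≠ 0 := fun k => by positivity
  have hcount_all : ∀ g : (∀ i : Fin l, Fin (m i) → ZMod 2) → (Fin mj → ZMod 2),
      Nat.card {a : Fin n → ZMod 2 // g (φ a) = Hj.mulVec a}
        = (Finset.univ.filter
            (fun s' : ∀ i : Fin l, Fin (m i) → ZMod 2 =>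
              (g s', s') ∈ LinearMap.range LΦ)).card * 2 ^ (n - full.rank) := by
    intro g
    rw [Nat.card_eq_fintype_card, Fintype.card_subtype]
    rw [Finset.card_eq_sum_card_fiberwise
      (f := fun a : Fin n → ZMod 2 => Lφ a)
      (t := (Finset.univ : Finset (∀ i : Fin l, Fin (m i) → ZMod 2)))
      (fun x _ => Finset.mem_univ _)]
    have hterm : ∀ s' : ∀ i : Fin l, Fin (m i) → ZMod 2,
        ((Finset.univ.filter (fun a : Fin n → ZMod 2 => g (φ a) = Hj.mulVec a)).filter
          (fun a : Fin n → ZMod 2 => Lφ a = s')).card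
        = if (g s', s') ∈ LinearMap.range LΦ then 2 ^ (n - full.rank) else 0 := by
      intro s'
      rw [Finset.filter_filter]
      have hpred : ∀ a : Fin n → ZMod 2,
          ((g (φ a) = Hj.mulVec a) ∧ Lφ a = s') ↔ LΦ a = (g s', s') := by
        intro a
        constructor
        · rintro ⟨h1, h2⟩
          refine Prod.ext ?_ h2
          show Lψ a = g s'
          rw [← h2, ← hφL]
          exact h1.symm
        · intro h
          have h1 : Lψ a = g s' := congrArg Prod.fst h
          have h2 : Lφ a = s' := congrArg Prod.snd h
          exact ⟨by rw [hφL, h2, ← h1]; rfl, h2⟩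
      rw [Finset.filter_congr (fun a _ => hpred a)]
      rw [show (Finset.univ.filter (fun a : Fin n → ZMod 2 => LΦ a = (g s', s'))).card
          = Nat.card {a : Fin n → ZMod 2 // LΦ a = (g s', s')} by
        rw [Nat.card_eq_fintype_card, Fintype.card_subtype]]
      by_cases hmem : (g s', s') ∈ LinearMap.range LΦ
      · rw [if_pos hmem, card_fiber LΦ hmem, hR]
      · rw [if_neg hmem, card_empty_pred (fun a ha => hmem ⟨a, ha⟩)]
    calc ∑ s' ∈ (Finset.univ : Finset (∀ i : Fin l, Fin (m i) → ZMod 2)),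
          ((Finset.univ.filter (fun a : Fin n → ZMod 2 => g (φ a) = Hj.mulVec a)).filter
            (fun a : Fin n → ZMod 2 => Lφ a = s')).card
        = ∑ s' ∈ (Finset.univ : Finset (∀ i : Fin l, Fin (m i) → ZMod 2)),
            if (g s', s') ∈ LinearMap.range LΦ then 2 ^ (n - full.rank) else 0 :=
          Finset.sum_congr rfl (fun s' _ => hterm s')
      _ = ∑ s' ∈ Finset.univ.filter
            (fun s' : ∀ i : Fin l, Fin (m i) → ZMod 2 =>
              (g s', s') ∈ LinearMap.range LΦ), 2 ^ (n - full.rank) :=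
          (Finset.sum_filter _ _).symm
      _ = _ := by rw [Finset.sum_const, smul_eq_mul]
  refine ⟨?_, ?_, ?_, ?_⟩
  · -- Part 1
    intro s hs sj
    have hsr : s ∈ LinearMap.range Lφ := by
      obtain ⟨a, ha⟩ := hs
      exact ⟨a, by rw [← hφL a]; exact ha⟩
    rw [hnum, hden, if_pos hsr]
    by_cases hj : (sj, s) ∈ LinearMap.range LΦ
    · rw [if_pos hj, if_pos ((hiff s sj).mpr hj)]
      have hexp : (2 : ℝ) ^ (n - r) = 2 ^ (n - full.rank) * 2 ^ t := by
        rw [← pow_add]; congr 1; omega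
      rw [hexp]
      field_simp
    · rw [if_neg hj, if_neg (fun h => hj ((hiff s sj).mp h))]
      simp
  · -- Part (a)
    intro htmj
    have hReq : full.rank = mj + r := by omega
    have hprodeq : LinearMap.range LΦ
        = (⊤ : Submodule (ZMod 2) (Fin mj → ZMod 2)).prod (LinearMap.range Lφ) := by
      apply Submodule.eq_of_le_of_finrank_le hprod_le
      rw [hR, finrank_prod_sub, finrank_top, Module.finrank_fin_fun (R := ZMod 2), hr, hReq]
    have hψprob : ∀ sj : Fin mj → ZMod 2,
        unifProb (Fin n → ZMod 2) (fun a => Hj.mulVec a = sj) = 1 / 2 ^ mj := by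
      intro sj
      rw [show (fun a : Fin n → ZMod 2 => Hj.mulVec a = sj) = (fun a => Lψ a = sj) from rfl,
        unifProb_linear Lψ sj, hψrank, if_pos (by rw [hψtop]; trivial)]
      have hexp : (2 : ℝ) ^ n = 2 ^ (n - mj) * 2 ^ mj := by
        rw [← pow_add]; congr 1; omega
      rw [hexp]
      field_simp
    refine ⟨hψprob, ?_⟩
    intro sj s
    by_cases hsr : s ∈ LinearMap.range Lφ
    · have hj : (sj, s) ∈ LinearMap.range LΦ := by
        rw [hprodeq]; exact ⟨Submodule.mem_top, hsr⟩
      rw [hnum, hden, hψprob, if_pos hj, if_pos hsr, hReq]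
      have h1 : (2 : ℝ) ^ n = 2 ^ (n - (mj + r)) * 2 ^ mj * 2 ^ r := by
        rw [← pow_add, ← pow_add]; congr 1; omega
      have h2 : (2 : ℝ) ^ (n - r) = 2 ^ (n - (mj + r)) * 2 ^ mj := by
        rw [← pow_add]; congr 1; omega
      rw [h1, h2]
      field_simp
    · have h0 : unifProb (Fin n → ZMod 2) (fun a => Hj.mulVec a = sj ∧ φ a = s) = 0 := by
        unfold unifProb
        rw [card_empty_pred (P := fun a => Hj.mulVec a = sj ∧ φ a = s)
          (fun a ha => hsr ⟨a, by rw [← hφL a]; exact ha.2⟩)]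
        simp
      rw [h0, hden, if_neg hsr]
      simp
  · -- Part (b) existence
    have hcount := hcount_all
    let guess : (∀ i : Fin l, Fin (m i) → ZMod 2) → (Fin mj → ZMod 2) :=
      fun s' => if h : ∃ a, Lφ a = s' then Lψ h.choose else 0
    refine ⟨guess, ?_⟩
    have hmemiff : ∀ s' : ∀ i : Fin l, Fin (m i) → ZMod 2,
        ((guess s', s') ∈ LinearMap.range LΦ) ↔ s' ∈ LinearMap.range Lφ := by
      intro s'
      constructor
      · rintro ⟨a, ha⟩
        exact ⟨a, congrArg Prod.snd ha⟩
      · intro hs'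
        have hex : ∃ a, Lφ a = s' := LinearMap.mem_range.mp hs'
        refine ⟨hex.choose, ?_⟩
        have hg : guess s' = Lψ hex.choose := dif_pos hex
        exact Prod.ext hg.symm hex.choose_spec
    have hfiltereq : (Finset.univ.filter
          (fun s' : ∀ i : Fin l, Fin (m i) → ZMod 2 =>
            (guess s', s') ∈ LinearMap.range LΦ)).card = 2 ^ r := by
      have hfe : (Finset.univ.filter
            (fun s' : ∀ i : Fin l, Fin (m i) → ZMod 2 =>
              (guess s', s') ∈ LinearMap.range LΦ))
          = (Finset.univ.filter
            (fun s' : ∀ i : Fin l, Fin (m i) → ZMod 2 =>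
              s' ∈ LinearMap.range Lφ)) := by
        ext s'
        simp only [Finset.mem_filter, hmemiff]
      rw [hfe, filter_card_eq_nat_card]
      exact (card_submodule (LinearMap.range Lφ)).trans (by rw [hr])
    unfold unifProb
    rw [hcount guess, hfiltereq,
      show (Fintype.card (Fin n → ZMod 2)) = 2 ^ n by simp]
    have e1 : (2 : ℝ) ^ n = 2 ^ r * 2 ^ (n - full.rank) * 2 ^ t := by
      rw [← pow_add, ← pow_add]; congr 1; omega
    push_cast
    rw [e1]
    field_simp
  · -- Part (b) bound
    intro g
    have hsub : (Finset.univ.filter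
          (fun s' : ∀ i : Fin l, Fin (m i) → ZMod 2 =>
            (g s', s') ∈ LinearMap.range LΦ)).card ≤ 2 ^ r := by
      have h1 : (Finset.univ.filter
            (fun s' : ∀ i : Fin l, Fin (m i) → ZMod 2 =>
              (g s', s') ∈ LinearMap.range LΦ))
          ⊆ (Finset.univ.filter
            (fun s' : ∀ i : Fin l, Fin (m i) → ZMod 2 =>
              s' ∈ LinearMap.range Lφ)) := by
        intro s' hs'
        rw [Finset.mem_filter] at hs' ⊢
        rcases hs'.2 with ⟨a, ha⟩
        exact ⟨hs'.1, ⟨a, congrArg Prod.snd ha⟩⟩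
      refine le_trans (Finset.card_le_card h1) (le_of_eq ?_)
      rw [filter_card_eq_nat_card]
      exact (card_submodule (LinearMap.range Lφ)).trans (by rw [hr])
    unfold unifProb
    rw [hcount_all g, show (Fintype.card (Fin n → ZMod 2)) = 2 ^ n by simp]
    have e1 : (2 : ℝ) ^ n = 2 ^ r * 2 ^ (n - full.rank) * 2 ^ t := by
      rw [← pow_add, ← pow_add]; congr 1; omega
    have key : ((2 : ℝ) ^ r * 2 ^ (n - full.rank)) / 2 ^ n = 1 / 2 ^ t := by
      rw [e1]; field_simp
    rw [← key]
    push_cast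
    gcongr
    exact_mod_cast hsub
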